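/- The cosine trinomial $T(t) = 1 + \frac{16}{15}\cos t + \frac{1}{15}\cos(4t)$ is nonnegative for every real $t$, and $T(0) = 2 + \frac{2}{15} > 2$. -/
import Mathlib

theorem stmt_10 :
    (∀ t : ℝ, 0 ≤ 1 + (16 / 15) * Real.cos t + (1 / 15) * Real.cos (4 * t)) ∧
    1 + (16 / 15) * Real.cos 0 + (1 / 15) * Real.cos (4 * 0) = 2 + 2 / 15 ∧
    (2 : ℝ) + 2 / 15 > 2 := by
  refine ⟨fun t => ?_, by norm_num, by norm_num⟩
  have h4 : (4 : ℝ) * t = 2 * (2 * t) := by ring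
  rw [h4, Real.cos_two_mul, Real.cos_two_mul]
  set c := Real.cos t
  have h1 : -1 ≤ c := Real.neg_one_le_cos t
  have h2 : c ≤ 1 := Real.cos_le_one t
  nlinarith [sq_nonneg ((c+1)*(c-1)), sq_nonneg (c+1), sq_nonneg (c*(c+1))]
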